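/- Let g(y) = 1/y - b y³ with b < 0 for y > 0. Then g''(y) = 2/y³ - 6by > 0 for all y > 0, |g''(y)| ≥ 2 y^{-3} near 0 and |g''(y)| ≥ 6|b| y near ∞; as a consequence of the one-dimensional nonhomogeneous dispersive estimates, there exists C > 0 such that for every t ≠ 0 and u₀ ∈ L¹(ℝ), ‖e^{it g(D)} u₀‖_{L^∞} ≤ C |t|^{-1/2} ‖u₀‖_{L¹}. -/

import Mathlib

open MeasureTheory

open Complex intervalIntegral Set

lemma norm_expI (r : ℝ) : ‖Complex.exp (Complex.I * (r:ℂ))‖ = 1 := by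
  rw [mul_comm]; exact Complex.norm_exp_ofReal_mul_I r

/-- van der Corput: non-stationary piece via integration by parts. -/
lemma vdc_nonstat (φ p q : ℝ → ℝ) (c d δ : ℝ) (hcd : c ≤ d) (hδ : 0 < δ)
    (hφ : ∀ ξ ∈ Set.Icc c d, HasDerivAt φ (p ξ) ξ)
    (hp : ∀ ξ ∈ Set.Icc c d, HasDerivAt p (q ξ) ξ)
    (hq0 : ∀ ξ ∈ Set.Icc c d, 0 ≤ q ξ)
    (hqc : ContinuousOn q (Set.Icc c d))
    (hsep : (∀ ξ ∈ Set.Icc c d, δ ≤ p ξ) ∨ (∀ ξ ∈ Set.Icc c d, p ξ ≤ -δ)) :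
    ‖∫ ξ in c..d, Complex.exp (Complex.I * (φ ξ : ℂ))‖ ≤ 3 / δ := by
  have huIcc : Set.uIcc c d = Set.Icc c d := Set.uIcc_of_le hcd
  have hpabs : ∀ ξ ∈ Set.Icc c d, δ ≤ |p ξ| := by
    intro ξ hξ
    rcases hsep with h | h
    · rw [abs_of_pos (lt_of_lt_of_le hδ (h ξ hξ))]; exact h ξ hξ
    · rw [abs_of_neg (lt_of_le_of_lt (h ξ hξ) (by linarith))]; linarith [h ξ hξ]
  have hpne : ∀ ξ ∈ Set.Icc c d, p ξ ≠ 0 := fun ξ hξ h0 => by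
    have := hpabs ξ hξ; rw [h0] at this; simp at this; linarith
  set F : ℝ → ℂ := fun ξ => Complex.exp (Complex.I * (φ ξ : ℂ)) with hF
  set G : ℝ → ℂ := fun ξ => -Complex.I * (((p ξ)⁻¹ : ℝ) : ℂ) with hG
  have hFnorm : ∀ ξ, ‖F ξ‖ = 1 := fun ξ => norm_expI (φ ξ)
  have hFd : ∀ ξ ∈ Set.Icc c d, HasDerivAt F (Complex.I * (p ξ) * F ξ) ξ := by
    intro ξ hξ
    have h1 : HasDerivAt (fun ξ => Complex.I * ((φ ξ : ℝ) : ℂ)) (Complex.I * (p ξ)) ξ :=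
      ((hφ ξ hξ).ofReal_comp).const_mul Complex.I
    have := h1.cexp
    simpa [hF, mul_comm] using this
  have hGd : ∀ ξ ∈ Set.Icc c d,
      HasDerivAt G (-Complex.I * ((-(q ξ) / (p ξ)^2 : ℝ) : ℂ)) ξ := by
    intro ξ hξ
    exact (((hp ξ hξ).inv (hpne ξ hξ)).ofReal_comp).const_mul (-Complex.I)
  have hpcont : ContinuousOn p (Set.Icc c d) :=
    fun ξ hξ => (hp ξ hξ).continuousAt.continuousWithinAt
  have hφcont : ContinuousOn φ (Set.Icc c d) :=
    fun ξ hξ => (hφ ξ hξ).continuousAt.continuousWithinAt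
  have hFcont : ContinuousOn F (Set.Icc c d) := by
    apply Complex.continuous_exp.comp_continuousOn
    exact continuousOn_const.mul (Complex.continuous_ofReal.comp_continuousOn hφcont)
  have hv' : IntervalIntegrable (fun ξ => Complex.I * (p ξ) * F ξ) volume c d := by
    apply ContinuousOn.intervalIntegrable
    rw [huIcc]
    exact (continuousOn_const.mul (Complex.continuous_ofReal.comp_continuousOn hpcont)).mul hFcont
  have hqp2cont : ContinuousOn (fun ξ => -(q ξ) / (p ξ)^2) (Set.Icc c d) := by
    apply ContinuousOn.div hqc.neg (hpcont.pow 2)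
    intro ξ hξ; exact pow_ne_zero 2 (hpne ξ hξ)
  have hu' : IntervalIntegrable (fun ξ => -Complex.I * ((-(q ξ) / (p ξ)^2 : ℝ) : ℂ)) volume c d := by
    apply ContinuousOn.intervalIntegrable
    rw [huIcc]
    exact continuousOn_const.mul (Complex.continuous_ofReal.comp_continuousOn hqp2cont)
  have hIBP := intervalIntegral.integral_mul_deriv_eq_deriv_mul
    (u := G) (v := F) (u' := fun ξ => -Complex.I * ((-(q ξ) / (p ξ)^2 : ℝ) : ℂ))
    (v' := fun ξ => Complex.I * (p ξ) * F ξ)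
    (fun ξ hξ => hGd ξ (huIcc ▸ hξ)) (fun ξ hξ => hFd ξ (huIcc ▸ hξ)) hu' hv'
  have hkey : ∫ ξ in c..d, F ξ = ∫ ξ in c..d, G ξ * (Complex.I * (p ξ) * F ξ) := by
    apply intervalIntegral.integral_congr
    intro ξ hξ
    rw [huIcc] at hξ
    have hpc : ((p ξ : ℝ) : ℂ) ≠ 0 := by exact_mod_cast hpne ξ hξ
    rw [hG]
    push_cast
    field_simp
    ring_nf
    rw [Complex.I_sq]
    ring
  have hGnorm : ∀ ξ ∈ Set.Icc c d, ‖G ξ‖ ≤ 1/δ := by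
    intro ξ hξ
    rw [hG]
    rw [norm_mul]
    simp only [norm_neg, Complex.norm_I, one_mul, Complex.norm_real, Real.norm_eq_abs, abs_inv]
    rw [one_div]
    exact inv_anti₀ hδ (hpabs ξ hξ)
  have hcmem : c ∈ Set.Icc c d := ⟨le_refl c, hcd⟩
  have hdmem : d ∈ Set.Icc c d := ⟨hcd, le_refl d⟩
  -- bound the boundary terms and the remainder integral
  have hbd1 : ‖G d * F d‖ ≤ 1/δ := by
    rw [norm_mul, hFnorm, mul_one]; exact hGnorm d hdmem
  have hbd2 : ‖G c * F c‖ ≤ 1/δ := by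
    rw [norm_mul, hFnorm, mul_one]; exact hGnorm c hcmem
  have hrem : ‖∫ ξ in c..d, (-Complex.I * ((-(q ξ) / (p ξ)^2 : ℝ) : ℂ)) * F ξ‖ ≤ 1/δ := by
    have h1 : ‖∫ ξ in c..d, (-Complex.I * ((-(q ξ) / (p ξ)^2 : ℝ) : ℂ)) * F ξ‖ ≤
        ∫ ξ in c..d, ‖(-Complex.I * ((-(q ξ) / (p ξ)^2 : ℝ) : ℂ)) * F ξ‖ :=
      intervalIntegral.norm_integral_le_integral_norm hcd
    have h2 : ∫ ξ in c..d, ‖(-Complex.I * ((-(q ξ) / (p ξ)^2 : ℝ) : ℂ)) * F ξ‖ =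
        ∫ ξ in c..d, q ξ / (p ξ)^2 := by
      apply intervalIntegral.integral_congr
      intro ξ hξ
      rw [huIcc] at hξ
      simp only [norm_mul, norm_neg, Complex.norm_I, one_mul, Complex.norm_real,
        Real.norm_eq_abs, hFnorm, mul_one]
      rw [abs_div, abs_neg, _root_.abs_of_nonneg (hq0 ξ hξ),
        _root_.abs_of_nonneg (by positivity : (0:ℝ) ≤ (p ξ)^2)]
    have h3 : ∫ ξ in c..d, q ξ / (p ξ)^2 = (p c)⁻¹ - (p d)⁻¹ := by
      have : ∫ ξ in c..d, q ξ / (p ξ)^2 = (-(p d)⁻¹) - (-(p c)⁻¹) := by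
        apply intervalIntegral.integral_eq_sub_of_hasDerivAt
        · intro ξ hξ
          rw [huIcc] at hξ
          have := ((hp ξ hξ).inv (hpne ξ hξ)).neg
          convert this using 1
          · rfl
          ring
        · apply ContinuousOn.intervalIntegrable
          rw [huIcc]
          apply ContinuousOn.div hqc (hpcont.pow 2)
          intro ξ hξ; exact pow_ne_zero 2 (hpne ξ hξ)
      rw [this]; ring
    have h4 : (p c)⁻¹ - (p d)⁻¹ ≤ 1/δ := by
      rcases hsep with h | h
      · have hc1 : δ ≤ p c := h c hcmem
        have hd1 : δ ≤ p d := h d hdmem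
        have h5 : (p c)⁻¹ ≤ δ⁻¹ := inv_anti₀ hδ hc1
        have h6 : (0:ℝ) < (p d)⁻¹ := inv_pos.mpr (lt_of_lt_of_le hδ hd1)
        rw [one_div]
        linarith
      · have hc1 : p c ≤ -δ := h c hcmem
        have hd1 : p d ≤ -δ := h d hdmem
        have h5 : (-(p d))⁻¹ ≤ δ⁻¹ := inv_anti₀ hδ (by linarith)
        have h6 : (p c)⁻¹ < 0 := inv_lt_zero.mpr (by linarith)
        rw [one_div]
        have : -(p d)⁻¹ = (-(p d))⁻¹ := by rw [inv_neg]
        linarith [this ▸ h5]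
    calc _ ≤ _ := h1
    _ = _ := h2
    _ = _ := h3
    _ ≤ _ := h4
  calc ‖∫ ξ in c..d, F ξ‖
      = ‖G d * F d - G c * F c - ∫ ξ in c..d, (-Complex.I * ((-(q ξ) / (p ξ)^2 : ℝ) : ℂ)) * F ξ‖ := by
        rw [hkey, hIBP]
    _ ≤ ‖G d * F d - G c * F c‖ + ‖∫ ξ in c..d, (-Complex.I * ((-(q ξ) / (p ξ)^2 : ℝ) : ℂ)) * F ξ‖ :=
        norm_sub_le _ _
    _ ≤ ‖G d * F d‖ + ‖G c * F c‖ + ‖∫ ξ in c..d, (-Complex.I * ((-(q ξ) / (p ξ)^2 : ℝ) : ℂ)) * F ξ‖ := by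
        linarith [norm_sub_le (G d * F d) (G c * F c)]
    _ ≤ 1/δ + 1/δ + 1/δ := by linarith
    _ = 3/δ := by ring

/-- van der Corput lemma with second-derivative lower bound. -/
lemma vdc2 (φ p q : ℝ → ℝ) (a b lam : ℝ) (hab : a ≤ b) (hlam : 0 < lam)
    (hφ : ∀ ξ ∈ Set.Icc a b, HasDerivAt φ (p ξ) ξ)
    (hp : ∀ ξ ∈ Set.Icc a b, HasDerivAt p (q ξ) ξ)
    (hq : ∀ ξ ∈ Set.Icc a b, lam ≤ q ξ)
    (hqc : ContinuousOn q (Set.Icc a b)) :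
    ‖∫ ξ in a..b, Complex.exp (Complex.I * (φ ξ : ℂ))‖ ≤ 8 / Real.sqrt lam := by
  set δ : ℝ := Real.sqrt lam with hδdef
  have hδ : 0 < δ := Real.sqrt_pos.mpr hlam
  have hδsq : δ * δ = lam := Real.mul_self_sqrt hlam.le
  have hq0 : ∀ ξ ∈ Set.Icc a b, 0 ≤ q ξ := fun ξ hξ => le_trans hlam.le (hq ξ hξ)
  have hpcont : ContinuousOn p (Set.Icc a b) :=
    fun ξ hξ => (hp ξ hξ).continuousAt.continuousWithinAt
  -- the gap estimate : lam * (y - x) ≤ p y - p x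
  have hgap : ∀ x ∈ Set.Icc a b, ∀ y ∈ Set.Icc a b, x ≤ y → lam * (y - x) ≤ p y - p x := by
    intro x hx y hy hxy
    have hmono : MonotoneOn (fun ξ => p ξ - lam * ξ) (Set.Icc a b) := by
      apply monotoneOn_of_deriv_nonneg (convex_Icc a b)
      · exact hpcont.sub ((continuous_const.mul continuous_id).continuousOn)
      · intro ξ hξ
        have hD : HasDerivAt (fun ξ => p ξ - lam * ξ) (q ξ - lam) ξ := by
          have := (hp ξ (interior_subset hξ)).sub ((hasDerivAt_id ξ).const_mul lam)
          exact this.congr_deriv (by ring)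
        exact hD.differentiableAt.differentiableWithinAt
      · intro ξ hξ
        have hD : HasDerivAt (fun ξ => p ξ - lam * ξ) (q ξ - lam) ξ := by
          have := (hp ξ (interior_subset hξ)).sub ((hasDerivAt_id ξ).const_mul lam)
          exact this.congr_deriv (by ring)
        rw [hD.deriv]
        have := hq ξ (interior_subset hξ)
        linarith
    have := hmono hx hy hxy
    simp only at this
    linarith
  have hpmono : MonotoneOn p (Set.Icc a b) := by
    intro x hx y hy hxy
    nlinarith [hgap x hx y hy hxy]
  -- restriction helper
  have hsub : ∀ c d, a ≤ c → d ≤ b → Set.Icc c d ⊆ Set.Icc a b :=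
    fun c d h1 h2 => Set.Icc_subset_Icc h1 h2
  -- apply the nonstationary lemma on a subinterval
  have hns : ∀ c d, a ≤ c → c ≤ d → d ≤ b →
      ((∀ ξ ∈ Set.Icc c d, δ ≤ p ξ) ∨ (∀ ξ ∈ Set.Icc c d, p ξ ≤ -δ)) →
      ‖∫ ξ in c..d, Complex.exp (Complex.I * (φ ξ : ℂ))‖ ≤ 3 / δ := by
    intro c d hac hcd hdb hsep
    exact vdc_nonstat φ p q c d δ hcd hδ
      (fun ξ hξ => hφ ξ (hsub c d hac hdb hξ))
      (fun ξ hξ => hp ξ (hsub c d hac hdb hξ))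
      (fun ξ hξ => hq0 ξ (hsub c d hac hdb hξ))
      (hqc.mono (hsub c d hac hdb)) hsep
  have h38 : 3 / δ ≤ 8 / δ := by gcongr; norm_num
  by_cases hA : δ ≤ p a
  · -- wholly nonstationary, positive
    have := hns a b le_rfl hab le_rfl (Or.inl (fun ξ hξ =>
      le_trans hA (hpmono (Set.left_mem_Icc.mpr hab) hξ hξ.1)))
    calc _ ≤ 3/δ := this
      _ ≤ 8/δ := h38
  by_cases hB : p b ≤ -δ
  · have := hns a b le_rfl hab le_rfl (Or.inr (fun ξ hξ =>
      le_trans (hpmono hξ (Set.right_mem_Icc.mpr hab) hξ.2) hB))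
    calc _ ≤ 3/δ := this
      _ ≤ 8/δ := h38
  push_neg at hA hB
  -- find c
  have hCc : ∃ c, c ∈ Set.Icc a b ∧ (-δ ≤ p c ∧ p c < δ) ∧
      ‖∫ ξ in a..c, Complex.exp (Complex.I * (φ ξ : ℂ))‖ ≤ 3 / δ := by
    by_cases h1 : p a ≤ -δ
    · have hIVT : (-δ) ∈ p '' Set.Icc a b := by
        apply intermediate_value_Icc hab hpcont
        exact ⟨h1, hB.le⟩
      obtain ⟨c, hc, hpc⟩ := hIVT
      refine ⟨c, hc, ⟨hpc.ge, by linarith⟩, ?_⟩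
      apply hns a c le_rfl hc.1 hc.2
      exact Or.inr (fun ξ hξ => hpc ▸ hpmono (hsub a c le_rfl hc.2 hξ) hc (hξ.2))
    · push_neg at h1
      refine ⟨a, Set.left_mem_Icc.mpr hab, ⟨h1.le, hA⟩, ?_⟩
      simp [intervalIntegral.integral_same]
      positivity
  -- find d
  have hDd : ∃ d, d ∈ Set.Icc a b ∧ (-δ < p d ∧ p d ≤ δ) ∧ (d = b ∨ p d = δ) ∧
      ‖∫ ξ in d..b, Complex.exp (Complex.I * (φ ξ : ℂ))‖ ≤ 3 / δ := by
    by_cases h2 : δ ≤ p b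
    · have hIVT : δ ∈ p '' Set.Icc a b := by
        apply intermediate_value_Icc hab hpcont
        exact ⟨hA.le, h2⟩
      obtain ⟨d, hd, hpd⟩ := hIVT
      refine ⟨d, hd, ⟨by linarith, hpd.le⟩, Or.inr hpd, ?_⟩
      apply hns d b hd.1 hd.2 le_rfl
      exact Or.inl (fun ξ hξ => hpd ▸ hpmono hd (hsub d b hd.1 le_rfl hξ) hξ.1)
    · push_neg at h2
      refine ⟨b, Set.right_mem_Icc.mpr hab, ⟨hB, h2.le⟩, Or.inl rfl, ?_⟩
      simp [intervalIntegral.integral_same]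
      positivity
  obtain ⟨c, hc, ⟨hpc1, hpc2⟩, hbc⟩ := hCc
  obtain ⟨d, hd, ⟨hpd1, hpd2⟩, hdalt, hbd⟩ := hDd
  have hcd : c ≤ d := by
    rcases hdalt with rfl | hpd
    · exact hc.2
    · by_contra hcon
      push_neg at hcon
      have := hpmono hd hc hcon.le
      rw [hpd] at this
      linarith
  -- middle piece
  have hmid : ‖∫ ξ in c..d, Complex.exp (Complex.I * (φ ξ : ℂ))‖ ≤ 2 * δ / lam := by
    have hlen : d - c ≤ 2 * δ / lam := by
      have := hgap c hc d hd hcd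
      rw [le_div_iff₀ hlam]
      nlinarith
    have h1 : ‖∫ ξ in c..d, Complex.exp (Complex.I * (φ ξ : ℂ))‖ ≤ 1 * |d - c| := by
      apply intervalIntegral.norm_integral_le_of_norm_le_const
      intro ξ _
      rw [norm_expI]
    rw [one_mul, _root_.abs_of_nonneg (by linarith : (0:ℝ) ≤ d - c)] at h1
    linarith
  -- combine
  have hsplit : ∫ ξ in a..b, Complex.exp (Complex.I * (φ ξ : ℂ)) =
      (∫ ξ in a..c, Complex.exp (Complex.I * (φ ξ : ℂ))) +
      (∫ ξ in c..d, Complex.exp (Complex.I * (φ ξ : ℂ))) +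
      (∫ ξ in d..b, Complex.exp (Complex.I * (φ ξ : ℂ))) := by
    have hφcont : ContinuousOn φ (Set.Icc a b) :=
      fun ξ hξ => (hφ ξ hξ).continuousAt.continuousWithinAt
    have hFcont : ContinuousOn (fun ξ => Complex.exp (Complex.I * (φ ξ : ℂ))) (Set.Icc a b) :=
      Complex.continuous_exp.comp_continuousOn
        (continuousOn_const.mul (Complex.continuous_ofReal.comp_continuousOn hφcont))
    have hint : ∀ x y : ℝ, x ∈ Set.Icc a b → y ∈ Set.Icc a b → IntervalIntegrable
        (fun ξ => Complex.exp (Complex.I * (φ ξ : ℂ))) volume x y := by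
      intro x y hx hy
      apply ContinuousOn.intervalIntegrable
      exact hFcont.mono (Set.uIcc_subset_Icc hx hy)
    have hma : a ∈ Set.Icc a b := Set.left_mem_Icc.mpr hab
    have hmb : b ∈ Set.Icc a b := Set.right_mem_Icc.mpr hab
    rw [intervalIntegral.integral_add_adjacent_intervals (hint a c hma hc) (hint c d hc hd),
      intervalIntegral.integral_add_adjacent_intervals (hint a d hma hd) (hint d b hd hmb)]
  have hmid2 : 2 * δ / lam = 2 / δ := by
    rw [← hδsq]
    field_simp
  rw [hsplit]
  calc ‖(∫ ξ in a..c, Complex.exp (Complex.I * (φ ξ : ℂ))) +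
      (∫ ξ in c..d, Complex.exp (Complex.I * (φ ξ : ℂ))) +
      (∫ ξ in d..b, Complex.exp (Complex.I * (φ ξ : ℂ)))‖
      ≤ ‖(∫ ξ in a..c, Complex.exp (Complex.I * (φ ξ : ℂ))) +
      (∫ ξ in c..d, Complex.exp (Complex.I * (φ ξ : ℂ)))‖ +
      ‖(∫ ξ in d..b, Complex.exp (Complex.I * (φ ξ : ℂ)))‖ := norm_add_le _ _
    _ ≤ ‖(∫ ξ in a..c, Complex.exp (Complex.I * (φ ξ : ℂ)))‖ +
      ‖(∫ ξ in c..d, Complex.exp (Complex.I * (φ ξ : ℂ)))‖ +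
      ‖(∫ ξ in d..b, Complex.exp (Complex.I * (φ ξ : ℂ)))‖ := by
        linarith [norm_add_le (∫ ξ in a..c, Complex.exp (Complex.I * (φ ξ : ℂ)))
          (∫ ξ in c..d, Complex.exp (Complex.I * (φ ξ : ℂ)))]
    _ ≤ 3/δ + 2/δ + 3/δ := by rw [← hmid2]; linarith
    _ = 8/δ := by ring

/-- lower bound for `2/ξ³ - 6bξ`. -/
lemma qlow (b : ℝ) (hb : b < 0) (ξ : ℝ) (hξ : 0 < ξ) :
    min 2 (-6*b) ≤ 2 * (ξ^3)⁻¹ - 6*b*ξ := by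
  rcases le_or_gt ξ 1 with h | h
  · have h1 : (1:ℝ) ≤ (ξ^3)⁻¹ := by
      rw [one_le_inv_iff₀]
      exact ⟨by positivity, pow_le_one₀ hξ.le h⟩
    have h2 : 0 ≤ -6*b*ξ := by nlinarith
    have := min_le_left (2:ℝ) (-6*b)
    nlinarith
  · have h1 : (0:ℝ) < 2 * (ξ^3)⁻¹ := by positivity
    have h2 : -6*b ≤ -6*b*ξ := by nlinarith
    have := min_le_right (2:ℝ) (-6*b)
    nlinarith

/-- van der Corput for the Ostrovsky phase, positive time coefficient. -/
lemma vdc_core (b : ℝ) (hb : b < 0) (w s ε R : ℝ) (hs : 0 < s) (hε : 0 < ε) (hεR : ε ≤ R) :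
    ‖∫ ξ in ε..R, Complex.exp (Complex.I * ((w*ξ + s*(ξ⁻¹ - b*ξ^3) : ℝ) : ℂ))‖ ≤
      8 / Real.sqrt (s * min 2 (-6*b)) := by
  set lam : ℝ := min 2 (-6*b) with hlamdef
  have hlam : 0 < lam := lt_min (by norm_num) (by linarith)
  set p : ℝ → ℝ := fun ξ => w + s*(-(ξ^2)⁻¹ - 3*b*ξ^2) with hp
  set q : ℝ → ℝ := fun ξ => s*(2*(ξ^3)⁻¹ - 6*b*ξ) with hq
  have hpos : ∀ ξ ∈ Set.Icc ε R, (0:ℝ) < ξ := fun ξ hξ => lt_of_lt_of_le hε hξ.1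
  apply vdc2 (fun ξ => w*ξ + s*(ξ⁻¹ - b*ξ^3)) p q ε R (s*lam) hεR (by positivity)
  · intro ξ hξ
    have hξ0 : ξ ≠ 0 := (hpos ξ hξ).ne'
    have h1 := ((hasDerivAt_inv hξ0).sub ((hasDerivAt_pow 3 ξ).const_mul b)).const_mul s
    have h2 := ((hasDerivAt_id ξ).const_mul w).add h1
    convert h2 using 1
    · rfl
    · rfl
    · rfl
    push_cast
    simp only [hp]
    ring
  · intro ξ hξ
    have hξ0 : ξ ≠ 0 := (hpos ξ hξ).ne'
    have h2ne : ξ^2 ≠ 0 := pow_ne_zero 2 hξ0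
    have h1 := ((((hasDerivAt_pow 2 ξ).inv h2ne).neg.sub
      ((hasDerivAt_pow 2 ξ).const_mul (3*b))).const_mul s).const_add w
    convert h1 using 1
    · rfl
    · rfl
    · rfl
    have : (ξ^2)^2 = ξ^4 := by ring
    rw [hq]
    field_simp
    ring
  · intro ξ hξ
    have := qlow b hb ξ (hpos ξ hξ)
    rw [hq]
    calc s * lam ≤ s * (2*(ξ^3)⁻¹ - 6*b*ξ) := by
          apply mul_le_mul_of_nonneg_left this hs.le
      _ = _ := rfl
  · apply ContinuousOn.mul continuousOn_const
    apply ContinuousOn.sub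
    · apply ContinuousOn.mul continuousOn_const
      apply ContinuousOn.inv₀ (by fun_prop)
      intro ξ hξ
      exact pow_ne_zero 3 (hpos ξ hξ).ne'
    · fun_prop

/-- The kernel phase function (with `|ξ|`). -/
noncomputable def kerf (b t w : ℝ) : ℝ → ℂ :=
  fun ξ => Complex.exp (Complex.I * ((w*ξ + t*((|ξ|)⁻¹ - b*|ξ|^3) : ℝ) : ℂ))

lemma kerf_meas (b t w : ℝ) : Measurable (kerf b t w) := by
  unfold kerf
  apply Complex.measurable_exp.comp
  apply Measurable.const_mul
  apply Complex.measurable_ofReal.comp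
  have h1 : Measurable fun x : ℝ => |x|⁻¹ - b*|x|^3 :=
    (measurable_abs.inv).sub ((measurable_abs.pow_const 3).const_mul b)
  exact (measurable_id'.const_mul w).add (h1.const_mul t)

lemma kerf_norm (b t w : ℝ) (ξ : ℝ) : ‖kerf b t w ξ‖ = 1 := norm_expI _

lemma kerf_integrableOn (b t w : ℝ) (s : Set ℝ) (hs : MeasurableSet s)
    [IsFiniteMeasure (volume.restrict s)] : IntegrableOn (kerf b t w) s := by
  apply Integrable.mono' (integrable_const (1:ℝ))
  · exact ((kerf_meas b t w).aestronglyMeasurable).restrict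
  · filter_upwards with ξ
    rw [kerf_norm]

/-- Half-line kernel bound. -/
lemma half_bound (b t : ℝ) (hb : b < 0) (ht : t ≠ 0) (w R : ℝ) :
    ‖∫ ξ in Set.Ioc (0:ℝ) R, kerf b t w ξ‖ ≤ 8 / Real.sqrt (|t| * min 2 (-6*b)) := by
  have hlam : 0 < min 2 (-6*b) := lt_min (by norm_num) (by linarith)
  have hBpos : 0 ≤ 8 / Real.sqrt (|t| * min 2 (-6*b)) := by positivity
  rcases le_or_gt R 0 with hR | hR
  · rw [Set.Ioc_eq_empty (by linarith : ¬ (0:ℝ) < R)]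
    simp only [Measure.restrict_empty, integral_zero_measure, norm_zero]
    exact hBpos
  -- the εₙ ↓ 0 approximation
  set f := kerf b t w with hf
  set sn : ℕ → Set ℝ := fun n => Set.Ioc (1/(n+1) : ℝ) R with hsn
  have hmono : Monotone sn := by
    intro m n hmn
    apply Set.Ioc_subset_Ioc_left
    apply one_div_le_one_div_of_le (by positivity)
    push_cast; linarith [(Nat.cast_le (α := ℝ)).mpr hmn]
  have hunion : (⋃ n, sn n) = Set.Ioc (0:ℝ) R := by
    ext ξ
    simp only [Set.mem_iUnion, Set.mem_Ioc, hsn]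
    constructor
    · rintro ⟨n, h1, h2⟩
      exact ⟨lt_trans (by positivity) h1, h2⟩
    · rintro ⟨h1, h2⟩
      obtain ⟨n, hn⟩ := exists_nat_gt (1/ξ)
      refine ⟨n, ?_, h2⟩
      rw [div_lt_iff₀ (by positivity)]
      rw [div_lt_iff₀ h1] at hn
      nlinarith [Nat.cast_nonneg (α := ℝ) n]
  have hintOn : IntegrableOn f (⋃ n, sn n) := by
    rw [hunion]; exact kerf_integrableOn b t w _ measurableSet_Ioc
  have htend := MeasureTheory.tendsto_setIntegral_of_monotone
    (fun n => measurableSet_Ioc) hmono hintOn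
  rw [← hunion]
  -- bound for each n
  have hbnd : ∀ n : ℕ, ‖∫ ξ in sn n, f ξ‖ ≤ 8 / Real.sqrt (|t| * min 2 (-6*b)) := by
    intro n
    set ε : ℝ := 1/(n+1) with hε
    have hε0 : 0 < ε := by positivity
    rcases le_or_gt ε R with hεR | hεR
    · have heq : ∫ ξ in sn n, f ξ = ∫ ξ in ε..R, f ξ :=
        (intervalIntegral.integral_of_le hεR).symm
      rw [heq]
      have hcong : ∀ g : ℝ → ℂ, (∀ ξ ∈ Set.uIcc ε R, f ξ = g ξ) →
          ∫ ξ in ε..R, f ξ = ∫ ξ in ε..R, g ξ := fun g h =>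
        intervalIntegral.integral_congr h
      have habs : ∀ ξ ∈ Set.uIcc ε R, |ξ| = ξ := by
        intro ξ hξ
        rw [Set.uIcc_of_le hεR] at hξ
        exact abs_of_pos (lt_of_lt_of_le hε0 hξ.1)
      rcases lt_or_gt_of_ne ht with htneg | htpos
      · -- t < 0 : conjugate
        have h1 : ∫ ξ in ε..R, f ξ =
            ∫ ξ in ε..R, (starRingEnd ℂ)
              (Complex.exp (Complex.I * (((-w)*ξ + (-t)*(ξ⁻¹ - b*ξ^3) : ℝ) : ℂ))) := by
          apply hcong
          intro ξ hξ
          rw [hf]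
          unfold kerf
          rw [← Complex.exp_conj]
          congr 1
          rw [habs ξ hξ]
          simp only [map_mul, Complex.conj_I, Complex.conj_ofReal]
          push_cast
          ring
        rw [h1]
        have h2 : ∀ (g : ℝ → ℂ), ∫ ξ in ε..R, (starRingEnd ℂ) (g ξ) =
            (starRingEnd ℂ) (∫ ξ in ε..R, g ξ) := by
          intro g
          rw [intervalIntegral.integral_of_le hεR, intervalIntegral.integral_of_le hεR,
            integral_conj]
        rw [h2, RCLike.norm_conj]
        have := vdc_core b hb (-w) (-t) ε R (by linarith) hε0 hεR
        rw [abs_of_neg htneg]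
        exact this
      · -- t > 0
        have h1 : ∫ ξ in ε..R, f ξ =
            ∫ ξ in ε..R, Complex.exp (Complex.I * ((w*ξ + t*(ξ⁻¹ - b*ξ^3) : ℝ) : ℂ)) := by
          apply hcong
          intro ξ hξ
          rw [hf]
          unfold kerf
          rw [habs ξ hξ]
        rw [h1]
        have := vdc_core b hb w t ε R htpos hε0 hεR
        rw [abs_of_pos htpos]
        exact this
    · have h0 : sn n = ∅ := Set.Ioc_eq_empty (not_lt.mpr hεR.le)
      rw [h0]
      simp only [Measure.restrict_empty, integral_zero_measure, norm_zero]
      exact hBpos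
  exact le_of_tendsto htend.norm (Filter.Eventually.of_forall hbnd)

/-- Full kernel bound over `[-R, R]`. -/
lemma kernel_bound (b t : ℝ) (hb : b < 0) (ht : t ≠ 0) (z R : ℝ) (hR : 0 ≤ R) :
    ‖∫ ξ in Set.Ioc (-R) R, kerf b t z ξ‖ ≤ 16 / Real.sqrt (|t| * min 2 (-6*b)) := by
  have hint : ∀ x y : ℝ, IntervalIntegrable (kerf b t z) volume x y := by
    intro x y
    rw [intervalIntegrable_iff]
    show IntegrableOn _ (Set.Ioc (x ⊓ y) (x ⊔ y)) _
    exact kerf_integrableOn b t z _ measurableSet_Ioc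
  have hsplit : ∫ ξ in (-R)..R, kerf b t z ξ =
      (∫ ξ in (-R)..(0:ℝ), kerf b t z ξ) + ∫ ξ in (0:ℝ)..R, kerf b t z ξ :=
    (intervalIntegral.integral_add_adjacent_intervals (hint (-R) 0) (hint 0 R)).symm
  have hneg : ∫ ξ in (-R)..(0:ℝ), kerf b t z ξ = ∫ ξ in (0:ℝ)..R, kerf b t (-z) ξ := by
    have h1 : ∫ ξ in (0:ℝ)..R, kerf b t z (-ξ) = ∫ ξ in (-R)..(-0:ℝ), kerf b t z ξ :=
      intervalIntegral.integral_comp_neg (fun ξ => kerf b t z ξ)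
    rw [neg_zero] at h1
    rw [← h1]
    apply intervalIntegral.integral_congr
    intro ξ _
    show Complex.exp (Complex.I * ((z * -ξ + t * (|(-ξ)|⁻¹ - b * |(-ξ)| ^ 3) : ℝ) : ℂ)) = _
    rw [abs_neg]
    unfold kerf
    congr 2
    push_cast
    ring
  have hIoc : ∫ ξ in Set.Ioc (-R) R, kerf b t z ξ = ∫ ξ in (-R)..R, kerf b t z ξ :=
    (intervalIntegral.integral_of_le (by linarith)).symm
  have hb1 : ‖∫ ξ in (0:ℝ)..R, kerf b t (-z) ξ‖ ≤ 8 / Real.sqrt (|t| * min 2 (-6*b)) := by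
    rw [intervalIntegral.integral_of_le hR]
    exact half_bound b t hb ht (-z) R
  have hb2 : ‖∫ ξ in (0:ℝ)..R, kerf b t z ξ‖ ≤ 8 / Real.sqrt (|t| * min 2 (-6*b)) := by
    rw [intervalIntegral.integral_of_le hR]
    exact half_bound b t hb ht z R
  rw [hIoc, hsplit, hneg]
  calc ‖_ + _‖ ≤ _ + _ := norm_add_le _ _
    _ ≤ 8 / Real.sqrt (|t| * min 2 (-6*b)) + 8 / Real.sqrt (|t| * min 2 (-6*b)) :=
        add_le_add hb1 hb2
    _ = 16 / Real.sqrt (|t| * min 2 (-6*b)) := by ring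

lemma part1 (b : ℝ) (hb : b < 0) (y : ℝ) (hy : 0 < y) :
    iteratedDeriv 2 (fun y : ℝ => 1 / y - b * y ^ 3) y = 2 / y ^ 3 - 6 * b * y := by
  set g : ℝ → ℝ := fun y => 1 / y - b * y ^ 3 with hgdef
  have hd1 : ∀ x : ℝ, x ≠ 0 → HasDerivAt g (-(x^2)⁻¹ - 3*b*x^2) x := by
    intro x hx
    have h1 := (hasDerivAt_inv hx).sub ((hasDerivAt_pow 3 x).const_mul b)
    have h2 : g = fun x : ℝ => x⁻¹ - b * x^3 := by
      funext x; rw [hgdef]; simp [one_div]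
    rw [h2]
    convert h1 using 1
    · rfl
    · rfl
    · rfl
    push_cast
    ring
  have hev : deriv g =ᶠ[nhds y] fun x => -(x^2)⁻¹ - 3*b*x^2 := by
    filter_upwards [IsOpen.mem_nhds isOpen_ne (by exact hy.ne' : y ≠ 0)] with x hx
    exact (hd1 x hx).deriv
  have hd2 : HasDerivAt (fun x : ℝ => -(x^2)⁻¹ - 3*b*x^2) (2/y^3 - 6*b*y) y := by
    have h2ne : y^2 ≠ 0 := pow_ne_zero 2 hy.ne'
    have h1 := (((hasDerivAt_pow 2 y).inv h2ne).neg).sub ((hasDerivAt_pow 2 y).const_mul (3*b))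
    convert h1 using 1
    · rfl
    · rfl
    · rfl
    field_simp
    ring
  rw [iteratedDeriv_succ, iteratedDeriv_one]
  rw [Filter.EventuallyEq.deriv_eq hev]
  exact hd2.deriv

lemma norm_expI' (r : ℝ) : ‖Complex.exp (-(Complex.I * (r:ℂ)))‖ = 1 := by
  have : -(Complex.I * (r:ℂ)) = Complex.I * ((-r : ℝ) : ℂ) := by push_cast; ring
  rw [this, norm_expI]

/-- Linearized Ostrovsky equation with `b < 0`: convexity bounds for
`g(y) = 1/y - by³` and the `L¹ → L^∞` dispersive decay `|t|^{-1/2}`. -/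
theorem stmt18 (b : ℝ) (hb : b < 0) (g : ℝ → ℝ)
    (hg : ∀ y : ℝ, g y = 1 / y - b * y ^ 3) :
    (∀ y : ℝ, 0 < y →
      iteratedDeriv 2 g y = 2 / y ^ 3 - 6 * b * y ∧
      0 < iteratedDeriv 2 g y ∧
      2 * y ^ (-3 : ℝ) ≤ |iteratedDeriv 2 g y| ∧
      6 * |b| * y ≤ |iteratedDeriv 2 g y|) ∧
    ∃ C : ℝ, 0 < C ∧ ∀ u₀ : ℝ → ℂ, Integrable u₀ → ∀ t : ℝ, t ≠ 0 → ∀ x : ℝ,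
      ‖((1 / (2 * Real.pi) : ℝ) : ℂ) *
        ∫ ξ : ℝ, Complex.exp (Complex.I * ((x * ξ : ℝ) : ℂ)) *
          Complex.exp (Complex.I * ((t * g |ξ| : ℝ) : ℂ)) *
          ∫ y : ℝ, Complex.exp (-(Complex.I * ((y * ξ : ℝ) : ℂ))) * u₀ y‖ ≤
      C / Real.sqrt |t| * ∫ y : ℝ, ‖u₀ y‖ := by
  have hgf : g = fun y : ℝ => 1 / y - b * y ^ 3 := funext hg
  constructor
  · -- Part 1
    intro y hy
    have h1 : iteratedDeriv 2 g y = 2 / y ^ 3 - 6 * b * y := by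
      rw [hgf]; exact part1 b hb y hy
    have h2 : 0 < 2 / y ^ 3 - 6 * b * y := by
      have : 0 < 2 / y^3 := by positivity
      nlinarith
    have habs : |iteratedDeriv 2 g y| = 2 / y ^ 3 - 6 * b * y := by
      rw [h1, _root_.abs_of_pos h2]
    have hrpow : y ^ (-3 : ℝ) = (y ^ 3)⁻¹ := by
      rw [show ((-3 : ℝ)) = -(3:ℕ) by push_cast; ring, Real.rpow_neg hy.le,
        Real.rpow_natCast]
    refine ⟨h1, h1 ▸ h2, ?_, ?_⟩
    · rw [habs, hrpow]
      have : 2 * (y^3)⁻¹ = 2 / y^3 := by rw [div_eq_mul_inv]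
      nlinarith
    · rw [habs, _root_.abs_of_neg hb]
      have : 0 < 2 / y^3 := by positivity
      nlinarith
  · -- Part 2
    set lam : ℝ := min 2 (-6*b) with hlamdef
    have hlam : 0 < lam := lt_min (by norm_num) (by linarith)
    have hsl : 0 < Real.sqrt lam := Real.sqrt_pos.mpr hlam
    refine ⟨16 / Real.sqrt lam, by positivity, ?_⟩
    intro u₀ hu t ht x
    have hst : 0 < Real.sqrt |t| := Real.sqrt_pos.mpr (abs_pos.mpr ht)
    set Cb : ℝ := 16 / Real.sqrt (|t| * lam) with hCbdef
    have hCb : 16 / Real.sqrt lam / Real.sqrt |t| = Cb := by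
      rw [hCbdef, Real.sqrt_mul (abs_nonneg t), div_div, mul_comm]
    have hCb0 : 0 ≤ Cb := by positivity
    have hIu : (0:ℝ) ≤ ∫ y, ‖u₀ y‖ := integral_nonneg (fun y => norm_nonneg _)
    -- the main estimate on ‖∫ f‖
    set F : ℝ → ℂ := fun ξ => ∫ y : ℝ, Complex.exp (-(Complex.I * ((y * ξ : ℝ) : ℂ))) * u₀ y
      with hFdef
    set f : ℝ → ℂ := fun ξ => Complex.exp (Complex.I * ((x * ξ : ℝ) : ℂ)) *
      Complex.exp (Complex.I * ((t * g |ξ| : ℝ) : ℂ)) * F ξ with hfdef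
    have hmain : ‖∫ ξ : ℝ, f ξ‖ ≤ Cb * ∫ y, ‖u₀ y‖ := by
      by_cases hfi : Integrable f
      · -- per-truncation bound
        have hnb : ∀ n : ℕ, ‖∫ ξ in (-(n:ℝ))..(n:ℝ), f ξ‖ ≤ Cb * ∫ y, ‖u₀ y‖ := by
          intro n
          have hnn : (-(n:ℝ)) ≤ n := neg_le_self n.cast_nonneg
          rw [intervalIntegral.integral_of_le hnn]
          set S : Set ℝ := Set.Ioc (-(n:ℝ)) (n:ℝ) with hSdef
          set e1 : ℝ → ℂ := fun ξ => Complex.exp (Complex.I * ((x * ξ : ℝ) : ℂ)) *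
            Complex.exp (Complex.I * ((t * g |ξ| : ℝ) : ℂ)) with he1def
          have he1norm : ∀ ξ, ‖e1 ξ‖ = 1 := by
            intro ξ; rw [he1def]; simp only [norm_mul, norm_expI, mul_one]
          have he1meas : Measurable e1 := by
            apply Measurable.mul
            · exact Complex.measurable_exp.comp (Measurable.const_mul
                (Complex.measurable_ofReal.comp (measurable_id'.const_mul x)) _)
            · apply Complex.measurable_exp.comp
              apply Measurable.const_mul
              apply Complex.measurable_ofReal.comp
              apply Measurable.const_mul
              rw [hgf]
              simp only [one_div]
              exact (measurable_abs.inv).sub ((measurable_abs.pow_const 3).const_mul b)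
          have hmerge : ∀ (ξ y : ℝ), e1 ξ * Complex.exp (-(Complex.I * ((y * ξ : ℝ) : ℂ))) =
              kerf b t (x - y) ξ := by
            intro ξ y
            rw [he1def, hgf]
            unfold kerf
            rw [mul_assoc, ← Complex.exp_add, ← Complex.exp_add]
            congr 1
            push_cast
            ring
          -- rewrite f as a double integral
          have hstep1 : ∀ ξ, f ξ = ∫ y : ℝ, e1 ξ *
              (Complex.exp (-(Complex.I * ((y * ξ : ℝ) : ℂ))) * u₀ y) := by
            intro ξ
            rw [show f ξ = e1 ξ * F ξ from rfl,
              show F ξ = ∫ y : ℝ, Complex.exp (-(Complex.I * ((y * ξ : ℝ) : ℂ))) * u₀ y from rfl]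
            exact (MeasureTheory.integral_const_mul _ _).symm
          -- integrability on the product
          have hprod : Integrable (Function.uncurry (fun ξ y => e1 ξ *
              (Complex.exp (-(Complex.I * ((y * ξ : ℝ) : ℂ))) * u₀ y)))
              ((volume.restrict S).prod volume) := by
            have hmeas : AEStronglyMeasurable (Function.uncurry (fun ξ y => e1 ξ *
                (Complex.exp (-(Complex.I * ((y * ξ : ℝ) : ℂ))) * u₀ y)))
                ((volume.restrict S).prod volume) := by
              apply AEStronglyMeasurable.mul
              · exact ((he1meas.comp measurable_fst).aestronglyMeasurable)
              · apply AEStronglyMeasurable.mul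
                · apply Continuous.aestronglyMeasurable
                  apply Complex.continuous_exp.comp
                  apply Continuous.neg
                  apply Continuous.mul continuous_const
                  exact Complex.continuous_ofReal.comp (continuous_snd.mul continuous_fst)
                · exact hu.1.comp_snd
            rw [integrable_prod_iff hmeas]
            constructor
            · filter_upwards with ξ
              simp only [Function.uncurry_apply_pair]
              apply Integrable.const_mul
              apply Integrable.bdd_mul hu
              · apply Continuous.aestronglyMeasurable
                apply Complex.continuous_exp.comp
                apply Continuous.neg
                exact continuous_const.mul
                  (Complex.continuous_ofReal.comp (continuous_id.mul continuous_const))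
              · exact Filter.Eventually.of_forall (fun y => le_of_eq (norm_expI' _))
            · have heq : (fun ξ => ∫ y : ℝ, ‖e1 ξ *
                  (Complex.exp (-(Complex.I * ((y * ξ : ℝ) : ℂ))) * u₀ y)‖) =
                  fun _ : ℝ => ∫ y, ‖u₀ y‖ := by
                funext ξ
                congr 1
                funext y
                simp only [norm_mul, norm_expI, norm_expI', one_mul]
                rw [he1norm, one_mul]
              simp only [Function.uncurry_apply_pair]
              rw [heq]
              exact integrable_const _
          have hswap := MeasureTheory.integral_integral_swap hprod
          -- inner integral equals kernel times u₀
          have hinner : ∀ y : ℝ, (∫ ξ in S, e1 ξ *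
              (Complex.exp (-(Complex.I * ((y * ξ : ℝ) : ℂ))) * u₀ y)) =
              (∫ ξ in S, kerf b t (x - y) ξ) * u₀ y := by
            intro y
            rw [← MeasureTheory.integral_mul_const]
            congr 1
            funext ξ
            rw [← mul_assoc, hmerge ξ y]
          have hker : ∀ y : ℝ, ‖(∫ ξ in S, kerf b t (x - y) ξ) * u₀ y‖ ≤ Cb * ‖u₀ y‖ := by
            intro y
            rw [norm_mul]
            apply mul_le_mul_of_nonneg_right _ (norm_nonneg _)
            exact kernel_bound b t hb ht (x - y) n n.cast_nonneg
          calc ‖∫ ξ in S, f ξ‖ = ‖∫ y : ℝ, (∫ ξ in S, kerf b t (x - y) ξ) * u₀ y‖ := by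
                rw [show (∫ ξ in S, f ξ) = ∫ ξ in S, ∫ y : ℝ, e1 ξ *
                    (Complex.exp (-(Complex.I * ((y * ξ : ℝ) : ℂ))) * u₀ y) from
                  integral_congr_ae (Filter.Eventually.of_forall (fun ξ => hstep1 ξ)), hswap]
                exact congrArg norm
                  (integral_congr_ae (Filter.Eventually.of_forall (fun y => hinner y)))
            _ ≤ ∫ y : ℝ, Cb * ‖u₀ y‖ := by
                apply MeasureTheory.norm_integral_le_of_norm_le (hu.norm.const_mul Cb)
                filter_upwards with y
                exact hker y
            _ = Cb * ∫ y, ‖u₀ y‖ := MeasureTheory.integral_const_mul Cb _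
        have hnegt : Filter.Tendsto (fun n : ℕ => -(n:ℝ)) Filter.atTop Filter.atBot :=
          Filter.Tendsto.comp Filter.tendsto_neg_atTop_atBot tendsto_natCast_atTop_atTop
        have htend := MeasureTheory.intervalIntegral_tendsto_integral hfi hnegt
          (tendsto_natCast_atTop_atTop) (l := Filter.atTop (α := ℕ))
        exact le_of_tendsto htend.norm (Filter.Eventually.of_forall hnb)
      · rw [integral_undef hfi]
        simp only [norm_zero]
        positivity
    -- conclude
    have hc1 : ‖((1 / (2 * Real.pi) : ℝ) : ℂ)‖ ≤ 1 := by
      rw [Complex.norm_real, Real.norm_eq_abs, _root_.abs_of_pos (by positivity)]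
      rw [div_le_one (by positivity)]
      linarith [Real.pi_gt_three]
    calc ‖((1 / (2 * Real.pi) : ℝ) : ℂ) * ∫ ξ : ℝ, f ξ‖
        = ‖((1 / (2 * Real.pi) : ℝ) : ℂ)‖ * ‖∫ ξ : ℝ, f ξ‖ := norm_mul _ _
      _ ≤ 1 * (Cb * ∫ y, ‖u₀ y‖) := by
          apply mul_le_mul hc1 hmain (norm_nonneg _) (by norm_num)
      _ = 16 / Real.sqrt lam / Real.sqrt |t| * ∫ y, ‖u₀ y‖ := by rw [hCb, one_mul]
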